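/- arXiv:2211.08815 — 2 statements merged into one kernel-verified Lean document; each statement's English description precedes it below -/
import Mathlib

section
/- Define π_i = 2[(1/2)^{i!} − (1/2)^{(i+1)!}] for all i ≥ 1; this defines a probability distribution on the positive integers with π_i ≥ π_{i+1} > 0, and for it liminf_{n→∞} n^p · σ_n² = 0 for every p > 0. -/
open Filter Topology

noncomputable def aaa (i : ℕ) : ℝ := (2 : ℝ)⁻¹ ^ (Nat.factorial (i + 1))

lemma aaa_pos (i : ℕ) : 0 < aaa i := pow_pos (by norm_num) _

lemma aaa_le (i : ℕ) : aaa i ≤ (2 : ℝ)⁻¹ ^ (i + 1) :=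
  pow_le_pow_of_le_one (by norm_num) (by norm_num) (Nat.self_le_factorial _)

lemma two_aaa_le (i : ℕ) : 2 * aaa (i + 1) ≤ aaa i := by
  have h : Nat.factorial (i + 1) + 1 ≤ Nat.factorial (i + 2) := by
    have h1 := Nat.factorial_pos (i + 1)
    have h2 : Nat.factorial (i + 2) = (i + 2) * Nat.factorial (i + 1) := rfl
    nlinarith
  have hle : aaa (i + 1) ≤ (2 : ℝ)⁻¹ ^ (Nat.factorial (i + 1) + 1) :=
    pow_le_pow_of_le_one (by norm_num) (by norm_num) h
  have heq : (2 : ℝ) * (2 : ℝ)⁻¹ ^ (Nat.factorial (i + 1) + 1) = aaa i := by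
    rw [pow_succ, aaa]; ring
  nlinarith

lemma aaa_tendsto : Tendsto aaa atTop (𝓝 0) := by
  have h : Tendsto (fun i : ℕ => (2 : ℝ)⁻¹ ^ (i + 1)) atTop (𝓝 0) :=
    (tendsto_pow_atTop_nhds_zero_of_lt_one (by norm_num) (by norm_num)).comp
      (tendsto_add_atTop_nat 1)
  exact squeeze_zero (fun i => (aaa_pos i).le) aaa_le h

lemma hasSum_tail (π : ℕ → ℝ) (hπ : ∀ i, π i = 2 * (aaa i - aaa (i + 1))) (m : ℕ) :
    HasSum (fun i => π (i + m)) (2 * aaa m) := by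
  have hnn : ∀ i, 0 ≤ π (i + m) := by
    intro i
    rw [hπ]
    have := two_aaa_le (i + m)
    have := aaa_pos (i + m + 1)
    nlinarith
  rw [hasSum_iff_tendsto_nat_of_nonneg hnn]
  have hsum : ∀ n, ∑ i ∈ Finset.range n, π (i + m) = 2 * aaa m - 2 * aaa (n + m) := by
    intro n
    have key := Finset.sum_range_sub' (f := fun j => 2 * aaa (j + m)) n
    simp only [Nat.zero_add] at key
    rw [← key]
    refine Finset.sum_congr rfl fun i _ => ?_
    rw [hπ]
    have h1 : i + m + 1 = i + 1 + m := by omega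
    rw [h1]
    ring
  simp only [hsum]
  have h2 : Tendsto (fun n : ℕ => aaa (n + m)) atTop (𝓝 0) :=
    aaa_tendsto.comp (tendsto_add_atTop_nat m)
  have := ((h2.const_mul 2).const_sub (2 * aaa m))
  simpa using this

/-- The weights `π_i = 2[(1/2)^{i!} − (1/2)^{(i+1)!}]`, `i ≥ 1` (here indexed by
`i : ℕ` representing the positive integer `i+1`), define a probability distribution
on the positive integers with `π_i ≥ π_{i+1} > 0`, for which
`liminf_{n→∞} n^p · σ_n² = 0` for every `p > 0`. -/
theorem example_distribution_liminf_zero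
    (π : ℕ → ℝ)
    (hπ : ∀ i, π i = 2 * (((2 : ℝ)⁻¹) ^ (Nat.factorial (i + 1)) -
      ((2 : ℝ)⁻¹) ^ (Nat.factorial (i + 2))))
    (μ : ℝ → ℝ) (hμ : ∀ t, μ t = ∑' i, (1 - Real.exp (-t * π i))) :
    HasSum π 1 ∧ (∀ i, 0 < π i) ∧ (∀ i, π (i + 1) ≤ π i) ∧
      ∀ p : ℝ, 0 < p →
        Filter.liminf (fun n : ℕ => (n : ℝ) ^ p * (μ (2 * n) - μ n)) atTop = 0 := by
  have hπ' : ∀ i, π i = 2 * (aaa i - aaa (i + 1)) := fun i => hπ i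
  -- basic facts
  have hpos : ∀ i, 0 < π i := by
    intro i
    rw [hπ' i]
    have := two_aaa_le i
    have := aaa_pos (i + 1)
    nlinarith
  have hmono : ∀ i, π (i + 1) ≤ π i := by
    intro i
    rw [hπ' i, hπ' (i + 1)]
    have h1 := two_aaa_le i
    have h2 := two_aaa_le (i + 1)
    have h3 := aaa_pos (i + 2)
    nlinarith
  have hanti : Antitone π := antitone_nat_of_succ_le hmono
  have hS : HasSum π 1 := by
    have := hasSum_tail π hπ' 0
    simp only [add_zero] at this
    have h0 : 2 * aaa 0 = 1 := by
      simp [aaa, Nat.factorial]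
    rwa [h0] at this
  have hsummable : Summable π := hS.summable
  have pi_ge_aaa : ∀ i, aaa i ≤ π i := by
    intro i
    rw [hπ' i]
    have := two_aaa_le i
    linarith
  have pi_le : ∀ i, π i ≤ 2 * aaa i := by
    intro i
    rw [hπ' i]
    have := aaa_pos (i + 1)
    linarith
  refine ⟨hS, hpos, hmono, ?_⟩
  -- the liminf statement
  intro p hp
  set F : ℕ → ℝ := fun n : ℕ => (n : ℝ) ^ p * (μ (2 * n) - μ n) with hF
  -- summability of the exponential series
  have hsum_exp : ∀ t : ℝ, 0 ≤ t → Summable (fun i => 1 - Real.exp (-t * π i)) := by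
    intro t ht
    refine Summable.of_nonneg_of_le (fun i => ?_) (fun i => ?_) (hsummable.mul_left t)
    · have : Real.exp (-t * π i) ≤ Real.exp 0 :=
        Real.exp_le_exp.mpr (by nlinarith [(hpos i).le])
      simp only [Real.exp_zero] at this
      linarith
    · have := Real.add_one_le_exp (-(t * π i))
      have h : -t * π i = -(t * π i) := by ring
      rw [h]
      linarith
  have hmu_le : ∀ n : ℕ, μ n ≤ μ (2 * n) := by
    intro n
    rw [hμ, hμ]
    refine Summable.tsum_le_tsum (fun i => ?_) (hsum_exp _ (by positivity)) (hsum_exp _ (by positivity))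
    have : Real.exp (-(2 * (n : ℝ)) * π i) ≤ Real.exp (-(n : ℝ) * π i) :=
      Real.exp_le_exp.mpr (by nlinarith [(hpos i).le, Nat.cast_nonneg (α := ℝ) n])
    linarith
  have hFnn : ∀ n : ℕ, 0 ≤ F n := by
    intro n
    have h1 : (0 : ℝ) ≤ (n : ℝ) ^ p := Real.rpow_nonneg (Nat.cast_nonneg n) p
    have h2 := hmu_le n
    have := mul_nonneg h1 (by linarith : (0 : ℝ) ≤ μ (2 * n) - μ n)
    simpa [hF] using this
  -- the subsequence
  set x : ℕ → ℝ := fun k => (2 : ℝ) ^ (Nat.factorial (k + 1)) with hx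
  set N : ℕ → ℕ := fun k => 2 ^ (2 * Nat.factorial (k + 1)) with hN
  have hx1 : ∀ k, (1 : ℝ) ≤ x k := fun k => one_le_pow₀ (by norm_num)
  have hx0 : ∀ k, (0 : ℝ) < x k := fun k => lt_of_lt_of_le one_pos (hx1 k)
  have hNx : ∀ k, ((N k : ℝ)) = x k ^ 2 := by
    intro k
    simp only [hN, hx]
    push_cast
    rw [mul_comm 2 (Nat.factorial (k + 1)), pow_mul]
  have haaa_inv : ∀ k, aaa k = (x k)⁻¹ := by
    intro k
    simp only [aaa, hx, inv_pow]
  -- key bound along the subsequence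
  have key : ∀ k : ℕ, μ (2 * N k) - μ (N k) ≤
      (k + 1 : ℝ) * Real.exp (-(x k)) + 2 * ((x k) ^ k)⁻¹ := by
    intro k
    set t : ℝ := (N k : ℝ) with ht
    have ht0 : 0 ≤ t := Nat.cast_nonneg _
    set g : ℕ → ℝ := fun i => Real.exp (-t * π i) - Real.exp (-(2 * t) * π i) with hg
    have hgsum : Summable g := by
      have h1 := hsum_exp t ht0
      have h2 := hsum_exp (2 * t) (by linarith)
      have := h2.sub h1
      refine this.congr fun i => ?_
      simp only [hg]
      ring
    have hgnn : ∀ i, 0 ≤ g i := by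
      intro i
      simp only [hg, sub_nonneg]
      exact Real.exp_le_exp.mpr (by nlinarith [(hpos i).le])
    have hmudiff : μ (2 * t) - μ t = ∑' i, g i := by
      rw [hμ, hμ, ← Summable.tsum_sub (hsum_exp (2 * t) (by linarith)) (hsum_exp t ht0)]
      refine tsum_congr fun i => ?_
      simp only [hg]
      ring
    have hsplit : ∑' i, g i = ∑ i ∈ Finset.range (k + 1), g i + ∑' i, g (i + (k + 1)) :=
      (Summable.sum_add_tsum_nat_add (k + 1) hgsum).symm
    -- head bound
    have hhead : ∑ i ∈ Finset.range (k + 1), g i ≤ (k + 1 : ℝ) * Real.exp (-(x k)) := by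
      have hterm : ∀ i ∈ Finset.range (k + 1), g i ≤ Real.exp (-(x k)) := by
        intro i hi
        have hik : i ≤ k := Nat.lt_succ_iff.mp (Finset.mem_range.mp hi)
        have hπik : π k ≤ π i := hanti hik
        have hxk : x k ≤ t * π k := by
          have h1 : aaa k ≤ π k := pi_ge_aaa k
          have h2 : t * aaa k ≤ t * π k := by nlinarith
          have h3 : t * aaa k = x k := by
            rw [ht, hNx k, haaa_inv k]
            field_simp
          linarith
        have h4 : Real.exp (-t * π i) ≤ Real.exp (-(x k)) := by
          apply Real.exp_le_exp.mpr
          have : t * π k ≤ t * π i := by nlinarith [(hpos k).le]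
          linarith
        have h5 : 0 < Real.exp (-(2 * t) * π i) := Real.exp_pos _
        simp only [hg]
        linarith
      calc ∑ i ∈ Finset.range (k + 1), g i ≤
          ∑ _i ∈ Finset.range (k + 1), Real.exp (-(x k)) := Finset.sum_le_sum hterm
        _ = (k + 1 : ℝ) * Real.exp (-(x k)) := by
          rw [Finset.sum_const, Finset.card_range, nsmul_eq_mul]
          push_cast
          ring
    -- tail bound
    have htail : ∑' i, g (i + (k + 1)) ≤ 2 * ((x k) ^ k)⁻¹ := by
      have hShift : HasSum (fun i => t * π (i + (k + 1))) (t * (2 * aaa (k + 1))) :=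
        (hasSum_tail π hπ' (k + 1)).mul_left t
      have hle : ∀ i, g (i + (k + 1)) ≤ t * π (i + (k + 1)) := by
        intro i
        set j := i + (k + 1)
        have hy : 0 ≤ t * π j := mul_nonneg ht0 (hpos j).le
        have h1 := Real.add_one_le_exp (-(t * π j))
        have h2 : Real.exp (-t * π j) ≤ 1 := by
          rw [show -t * π j = -(t * π j) by ring]
          calc Real.exp (-(t * π j)) ≤ Real.exp 0 := Real.exp_le_exp.mpr (by linarith)
            _ = 1 := Real.exp_zero
        have h3 : 0 < Real.exp (-(2 * t) * π j) := Real.exp_pos _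
        have h4 : Real.exp (-(2 * t) * π j) = Real.exp (-t * π j) ^ 2 := by
          rw [← Real.exp_nat_mul]
          congr 1
          push_cast
          ring
        have h5 : 0 < Real.exp (-t * π j) := Real.exp_pos _
        have h1' : 1 - Real.exp (-t * π j) ≤ t * π j := by
          rw [show -t * π j = -(t * π j) by ring]
          linarith
        simp only [hg]
        rw [h4]
        nlinarith [sq_nonneg (1 - Real.exp (-t * π j))]
      have := Summable.tsum_le_tsum hle ((summable_nat_add_iff (k + 1)).mpr hgsum) hShift.summable
      have hval : t * (2 * aaa (k + 1)) = 2 * ((x k) ^ k)⁻¹ := by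
        have hfac : Nat.factorial (k + 2) = (k + 2) * Nat.factorial (k + 1) := rfl
        have : aaa (k + 1) = ((x k)⁻¹) ^ (k + 2) := by
          simp only [aaa, hx, hfac]
          rw [mul_comm (k + 2) (Nat.factorial (k + 1)), pow_mul, inv_pow]
        rw [ht, hNx k, this]
        have hxne : x k ≠ 0 := (hx0 k).ne'
        field_simp
        rw [one_div, inv_pow, pow_add]
        field_simp
      rw [hShift.tsum_eq] at this
      linarith
    rw [show (2 : ℝ) * (N k : ℝ) = 2 * t from rfl, hmudiff, hsplit]
    linarith
  -- bound on F along the subsequence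
  have hNtend : Tendsto N atTop atTop := by
    apply tendsto_atTop_mono (fun k => ?_) tendsto_id
    show k ≤ N k
    calc k ≤ 2 ^ k := Nat.le_of_lt (Nat.lt_two_pow_self (n := k))
      _ ≤ N k := Nat.pow_le_pow_right (by norm_num)
          (by nlinarith [Nat.self_le_factorial (k + 1), Nat.factorial_pos (k + 1)])
  have hxtend : Tendsto x atTop atTop := by
    apply tendsto_atTop_mono (fun k => ?_)
      (tendsto_pow_atTop_atTop_of_one_lt (by norm_num : (1 : ℝ) < 2))
    simp only [hx]
    exact pow_le_pow_right₀ (by norm_num)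
      (le_trans (Nat.le_succ k) (Nat.self_le_factorial (k + 1)))
  -- the dominating sequence
  set u : ℕ → ℝ := fun k => (x k) ^ (2 * p + 1) * Real.exp (-(x k)) + 2 / x k with hu
  have hutend : Tendsto u atTop (𝓝 0) := by
    have hA : Tendsto (fun k => (x k) ^ (2 * p + 1) * Real.exp (-(x k))) atTop (𝓝 0) := by
      have h := (tendsto_rpow_mul_exp_neg_mul_atTop_nhds_zero (2 * p + 1) 1
        one_pos).comp hxtend
      refine h.congr fun k => ?_
      simp [Function.comp]
    have hB : Tendsto (fun k => 2 / x k) atTop (𝓝 0) := hxtend.const_div_atTop 2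
    simpa using hA.add hB
  -- F (N k) ≤ u k eventually
  have hFle : ∀ᶠ k in atTop, F (N k) ≤ u k := by
    filter_upwards [eventually_ge_atTop (⌈2 * p⌉₊ + 1)] with k hk
    have hk2p : 2 * p + 1 ≤ (k : ℝ) := by
      have h1 : 2 * p ≤ (⌈2 * p⌉₊ : ℝ) := Nat.le_ceil _
      have h2 : (⌈2 * p⌉₊ : ℝ) + 1 ≤ (k : ℝ) := by exact_mod_cast hk
      linarith
    have hNp : ((N k : ℝ)) ^ p = (x k) ^ (2 * p) := by
      rw [hNx k, ← Real.rpow_natCast (x k) 2, ← Real.rpow_mul (hx0 k).le]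
      norm_num [mul_comm]
    have hbound := key k
    have hmd : 0 ≤ μ (2 * N k) - μ (N k) := by
      have := hmu_le (N k); linarith
    have hNppos : 0 ≤ ((N k : ℝ)) ^ p := Real.rpow_nonneg (Nat.cast_nonneg _) p
    have step1 : F (N k) ≤ (x k) ^ (2 * p) *
        ((k + 1 : ℝ) * Real.exp (-(x k)) + 2 * ((x k) ^ k)⁻¹) := by
      have := mul_le_mul_of_nonneg_left hbound hNppos
      simpa [hF, hNp] using this
    have hk1x : (k + 1 : ℝ) ≤ x k := by
      have h1 : (k : ℕ) + 1 ≤ 2 ^ (k + 1) :=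
        Nat.succ_le_of_lt (Nat.lt_of_lt_of_le (Nat.lt_two_pow_self (n := k))
          (Nat.pow_le_pow_right (by norm_num) (Nat.le_succ k)))
      have h2 : (2 : ℕ) ^ (k + 1) ≤ 2 ^ (Nat.factorial (k + 1)) :=
        Nat.pow_le_pow_right (by norm_num) (Nat.self_le_factorial (k + 1))
      have : ((k : ℕ) + 1 : ℕ) ≤ 2 ^ (Nat.factorial (k + 1)) := le_trans h1 h2
      have := (Nat.cast_le (α := ℝ)).mpr this
      push_cast at this
      simpa [hx] using this
    have hA : (x k) ^ (2 * p) * ((k + 1 : ℝ) * Real.exp (-(x k))) ≤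
        (x k) ^ (2 * p + 1) * Real.exp (-(x k)) := by
      have hxp : 0 ≤ (x k) ^ (2 * p) := Real.rpow_nonneg (hx0 k).le _
      have he : 0 < Real.exp (-(x k)) := Real.exp_pos _
      have hxe : (x k) ^ (2 * p) * (x k) = (x k) ^ (2 * p + 1) := by
        rw [Real.rpow_add (hx0 k), Real.rpow_one]
      have h6 : (x k ^ (2 * p) * Real.exp (-(x k))) * ((k : ℝ) + 1) ≤
          (x k ^ (2 * p) * Real.exp (-(x k))) * x k :=
        mul_le_mul_of_nonneg_left hk1x (mul_nonneg hxp he.le)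
      calc (x k) ^ (2 * p) * ((k + 1 : ℝ) * Real.exp (-(x k)))
          = (x k ^ (2 * p) * Real.exp (-(x k))) * ((k : ℝ) + 1) := by ring
        _ ≤ (x k ^ (2 * p) * Real.exp (-(x k))) * x k := h6
        _ = (x k) ^ (2 * p + 1) * Real.exp (-(x k)) := by rw [← hxe]; ring
    have hB : (x k) ^ (2 * p) * (2 * ((x k) ^ k)⁻¹) ≤ 2 / x k := by
      have h1 : (x k) ^ (2 * p) * ((x k) ^ k)⁻¹ = (x k) ^ (2 * p - (k : ℝ)) := by
        rw [Real.rpow_sub (hx0 k), ← Real.rpow_natCast (x k) k]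
        rw [div_eq_mul_inv]
      have h2 : (x k) ^ (2 * p - (k : ℝ)) ≤ (x k) ^ (-1 : ℝ) :=
        Real.rpow_le_rpow_of_exponent_le (hx1 k) (by linarith)
      have h3 : (x k) ^ (-1 : ℝ) = (x k)⁻¹ := by
        rw [Real.rpow_neg_one]
      calc (x k) ^ (2 * p) * (2 * ((x k) ^ k)⁻¹)
          = 2 * ((x k) ^ (2 * p) * ((x k) ^ k)⁻¹) := by ring
        _ = 2 * (x k) ^ (2 * p - (k : ℝ)) := by rw [h1]
        _ ≤ 2 * (x k)⁻¹ := by rw [← h3]; nlinarith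
        _ = 2 / x k := by rw [div_eq_mul_inv]
    calc F (N k) ≤ (x k) ^ (2 * p) *
        ((k + 1 : ℝ) * Real.exp (-(x k)) + 2 * ((x k) ^ k)⁻¹) := step1
      _ = (x k) ^ (2 * p) * ((k + 1 : ℝ) * Real.exp (-(x k))) +
          (x k) ^ (2 * p) * (2 * ((x k) ^ k)⁻¹) := by ring
      _ ≤ u k := by simp only [hu]; linarith
  have hseq : Tendsto (fun k => F (N k)) atTop (𝓝 0) :=
    squeeze_zero' (Eventually.of_forall fun k => hFnn (N k)) hFle hutend
  -- conclude about the liminf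
  have hbdd : IsBoundedUnder (· ≥ ·) atTop F :=
    ⟨0, eventually_map.mpr (Eventually.of_forall hFnn)⟩
  have hfreq : ∀ ε : ℝ, 0 < ε → ∃ᶠ n in atTop, F n ≤ ε := by
    intro ε hε
    have h1 : ∀ᶠ k in atTop, F (N k) < ε := hseq.eventually_lt_const hε
    exact hNtend.frequently ((h1.mono fun k hk => hk.le).frequently)
  have hcob : IsCoboundedUnder (· ≥ ·) atTop F :=
    IsCoboundedUnder.of_frequently_le (hfreq 1 one_pos)
  refine le_antisymm ?_ (le_liminf_of_le hcob (Eventually.of_forall hFnn))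
  refine le_of_forall_pos_le_add fun ε hε => ?_
  have := liminf_le_of_frequently_le (hfreq ε hε) hbdd
  simpa using this
end

section
/- Let h(n) and w_n be positive sequences such that h(n) → ∞, w_n/n → 0 and w_n²/(n h(n)) → ∞ as n → ∞. Then lim_{n→∞} (1/h(n)) log[ P(N_{n−w_n} ≥ n) + P(N_{n+w_n} ≤ n) ] = −∞, where for each s > 0, N_s is a Poisson random variable with mean s. -/
open MeasureTheory ProbabilityTheory Filter Topology

lemma tsum_ofReal_exp (x : ℝ) (hx : 0 ≤ x) :
    ∑' m : ℕ, ENNReal.ofReal (x ^ m / m.factorial) = ENNReal.ofReal (Real.exp x) := by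
  rw [← ENNReal.ofReal_tsum_of_nonneg (fun n => by positivity) (Real.summable_pow_div_factorial x)]
  congr 1
  rw [Real.exp_eq_exp_ℝ, NormedSpace.exp_eq_tsum_div]

lemma exp_lb (u : ℝ) (h0 : 0 ≤ u) (h1 : u ≤ 1) :
    1 + u + u^2/2 - (2/9)*u^3 ≤ Real.exp u := by
  have hb := (abs_le.1 (Real.exp_bound (by rw [abs_of_nonneg h0]; exact h1) (n := 3) (by norm_num))).1
  have habs : |u| = u := abs_of_nonneg h0
  simp only [Finset.sum_range_succ, Finset.sum_range_zero, habs] at hb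
  norm_num [Nat.factorial] at hb
  nlinarith [hb]

lemma exp_neg_lb (u : ℝ) (h0 : 0 ≤ u) (h1 : u ≤ 1) :
    1 - u + u^2/2 - (2/9)*u^3 ≤ Real.exp (-u) := by
  have hb := (abs_le.1 (Real.exp_bound (x := -u) (by rw [abs_neg, abs_of_nonneg h0]; exact h1)
      (n := 3) (by norm_num))).1
  have habs : |(-u)| = u := by rw [abs_neg, abs_of_nonneg h0]
  simp only [Finset.sum_range_succ, Finset.sum_range_zero, habs] at hb
  norm_num [Nat.factorial] at hb
  nlinarith [hb]

lemma neg_log_one_sub_ge (x : ℝ) (h0 : 0 ≤ x) (h1 : x ≤ 1/2) :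
    x + x^2/8 ≤ -Real.log (1 - x) := by
  have hx : (0:ℝ) < 1 - x := by linarith
  rw [le_neg, Real.log_le_iff_le_exp hx]
  have key := exp_neg_lb (x + x^2/8) (by positivity) (by nlinarith)
  have h3 : x^3 ≤ x^2 * (1/2) := by nlinarith [sq_nonneg x]
  have h4 : x^4 ≤ x^2 * (1/4) := by nlinarith [sq_nonneg x, sq_nonneg (x*x)]
  have h5 : x^5 ≤ x^2 * (1/8) := by nlinarith [h3, h4, sq_nonneg x]
  have h6 : x^6 ≤ x^2 * (1/16) := by nlinarith [h4, sq_nonneg x, sq_nonneg (x*x)]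
  calc (1:ℝ) - x ≤ 1 - (x + x^2/8) + (x + x^2/8)^2/2 - (2/9)*(x + x^2/8)^3 := by
        nlinarith [h3, h4, h5, h6, sq_nonneg x]
    _ ≤ Real.exp (-(x + x^2/8)) := key

lemma log_one_add_le (x : ℝ) (h0 : 0 ≤ x) (h1 : x ≤ 1/2) :
    Real.log (1 + x) ≤ x - x^2/8 := by
  have hx : (0:ℝ) < 1 + x := by linarith
  rw [Real.log_le_iff_le_exp hx]
  have key := exp_lb (x - x^2/8) (by nlinarith) (by nlinarith)
  have h3 : x^3 ≤ x^2 * (1/2) := by nlinarith [sq_nonneg x]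
  have h4 : x^4 ≤ x^2 * (1/4) := by nlinarith [sq_nonneg x, sq_nonneg (x*x)]
  have h5 : x^5 ≤ x^2 * (1/8) := by nlinarith [h3, h4, sq_nonneg x]
  have h6 : x^6 ≤ x^2 * (1/16) := by nlinarith [h4, sq_nonneg x, sq_nonneg (x*x)]
  calc (1:ℝ) + x ≤ 1 + (x - x^2/8) + (x - x^2/8)^2/2 - (2/9)*(x - x^2/8)^3 := by
        nlinarith [h3, h4, h5, h6, sq_nonneg x]
    _ ≤ Real.exp (x - x^2/8) := key

lemma pois_upper_tail {Ω : Type*} [MeasurableSpace Ω] (P : Measure Ω) (X : Ω → ℕ)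
    {s : ℝ} (hs : 0 ≤ s)
    (hp : ∀ k : ℕ, P {ω | X ω = k} = ENNReal.ofReal (Real.exp (-s) * s ^ k / Nat.factorial k))
    (n : ℕ) {t : ℝ} (ht : 0 ≤ t) :
    P {ω | n ≤ X ω} ≤ ENNReal.ofReal (Real.exp (-(t * n) + s * (Real.exp t - 1))) := by
  have hset : {ω | n ≤ X ω} = ⋃ k : ℕ, {ω | X ω = n + k} := by
    ext ω
    simp only [Set.mem_setOf_eq, Set.mem_iUnion]
    constructor
    · intro hle; exact ⟨X ω - n, by omega⟩
    · rintro ⟨k, hk⟩; omega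
  have hC : (0:ℝ) ≤ Real.exp (-(t*n) - s) := (Real.exp_pos _).le
  calc P {ω | n ≤ X ω} ≤ ∑' k : ℕ, P {ω | X ω = n + k} := hset ▸ measure_iUnion_le _
    _ ≤ ∑' k : ℕ, ENNReal.ofReal (Real.exp (-(t*n) - s) * ((s * Real.exp t) ^ (n+k) / Nat.factorial (n+k))) := by
        refine ENNReal.tsum_le_tsum fun k => ?_
        rw [hp]
        apply ENNReal.ofReal_le_ofReal
        have e1 : Real.exp (-(t*n) - s) * ((s * Real.exp t) ^ (n+k) / Nat.factorial (n+k))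
            = (Real.exp (-s) * s ^ (n+k) / Nat.factorial (n+k)) * Real.exp (t * k) := by
          rw [mul_pow, ← Real.exp_nat_mul]
          rw [div_eq_mul_inv, div_eq_mul_inv]
          have : Real.exp (-(t*n) - s) * Real.exp ((n+k : ℕ) * t) = Real.exp (-s) * Real.exp (t * k) := by
            rw [← Real.exp_add, ← Real.exp_add]
            congr 1
            push_cast
            ring
          calc Real.exp (-(t*n) - s) * (s ^ (n+k) * Real.exp ((n+k : ℕ) * t) * (Nat.factorial (n+k) : ℝ)⁻¹)
                = (Real.exp (-(t*n) - s) * Real.exp ((n+k : ℕ) * t)) * (s ^ (n+k) * (Nat.factorial (n+k) : ℝ)⁻¹) := by ring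
            _ = (Real.exp (-s) * Real.exp (t * k)) * (s ^ (n+k) * (Nat.factorial (n+k) : ℝ)⁻¹) := by rw [this]
            _ = Real.exp (-s) * s ^ (n+k) * (Nat.factorial (n+k) : ℝ)⁻¹ * Real.exp (t * k) := by ring
        rw [e1]
        have h1 : (1:ℝ) ≤ Real.exp (t * k) := Real.one_le_exp (by positivity)
        have h2 : (0:ℝ) ≤ Real.exp (-s) * s ^ (n+k) / Nat.factorial (n+k) := by positivity
        nlinarith
    _ ≤ ∑' m : ℕ, ENNReal.ofReal (Real.exp (-(t*n) - s) * ((s * Real.exp t) ^ m / Nat.factorial m)) :=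
        ENNReal.tsum_comp_le_tsum_of_injective (add_right_injective n) _
    _ = ENNReal.ofReal (Real.exp (-(t*n) - s)) * ∑' m : ℕ, ENNReal.ofReal ((s * Real.exp t) ^ m / Nat.factorial m) := by
        rw [← ENNReal.tsum_mul_left]
        congr 1 with m
        rw [ENNReal.ofReal_mul hC]
    _ = ENNReal.ofReal (Real.exp (-(t*n) - s)) * ENNReal.ofReal (Real.exp (s * Real.exp t)) := by
        rw [tsum_ofReal_exp _ (by positivity)]
    _ = ENNReal.ofReal (Real.exp (-(t * n) + s * (Real.exp t - 1))) := by
        rw [← ENNReal.ofReal_mul hC, ← Real.exp_add]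
        congr 2
        ring

lemma pois_lower_tail {Ω : Type*} [MeasurableSpace Ω] (P : Measure Ω) (X : Ω → ℕ)
    {s : ℝ} (hs : 0 ≤ s)
    (hp : ∀ k : ℕ, P {ω | X ω = k} = ENNReal.ofReal (Real.exp (-s) * s ^ k / Nat.factorial k))
    (n : ℕ) {t : ℝ} (ht : 0 ≤ t) :
    P {ω | X ω ≤ n} ≤ ENNReal.ofReal (Real.exp (t * n + s * (Real.exp (-t) - 1))) := by
  have hC : (0:ℝ) ≤ Real.exp (t*n - s) := (Real.exp_pos _).le
  have hset : {ω | X ω ≤ n} = ⋃ k : ℕ, {ω | X ω = k ∧ k ≤ n} := by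
    ext ω
    simp only [Set.mem_setOf_eq, Set.mem_iUnion]
    exact ⟨fun hle => ⟨X ω, rfl, hle⟩, fun ⟨k, hk, hkn⟩ => hk ▸ hkn⟩
  calc P {ω | X ω ≤ n} ≤ ∑' k : ℕ, P {ω | X ω = k ∧ k ≤ n} := hset ▸ measure_iUnion_le _
    _ ≤ ∑' k : ℕ, ENNReal.ofReal (Real.exp (t*n - s) * ((s * Real.exp (-t)) ^ k / Nat.factorial k)) := by
        refine ENNReal.tsum_le_tsum fun k => ?_
        rcases le_or_gt k n with hk | hk
        · have hEq : {ω | X ω = k ∧ k ≤ n} = {ω | X ω = k} := by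
            ext ω; simp [hk]
          rw [hEq, hp]
          apply ENNReal.ofReal_le_ofReal
          have e1 : Real.exp (t*n - s) * ((s * Real.exp (-t)) ^ k / Nat.factorial k)
              = (Real.exp (-s) * s ^ k / Nat.factorial k) * Real.exp (t * (n - k : ℝ)) := by
            rw [mul_pow, ← Real.exp_nat_mul]
            rw [div_eq_mul_inv, div_eq_mul_inv]
            have : Real.exp (t*n - s) * Real.exp ((k:ℕ) * (-t)) = Real.exp (-s) * Real.exp (t * (n - k : ℝ)) := by
              rw [← Real.exp_add, ← Real.exp_add]
              congr 1
              ring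
            calc Real.exp (t*n - s) * (s ^ k * Real.exp ((k:ℕ) * (-t)) * (Nat.factorial k : ℝ)⁻¹)
                  = (Real.exp (t*n - s) * Real.exp ((k:ℕ) * (-t))) * (s ^ k * (Nat.factorial k : ℝ)⁻¹) := by ring
              _ = (Real.exp (-s) * Real.exp (t * (n - k : ℝ))) * (s ^ k * (Nat.factorial k : ℝ)⁻¹) := by rw [this]
              _ = Real.exp (-s) * s ^ k * (Nat.factorial k : ℝ)⁻¹ * Real.exp (t * (n - k : ℝ)) := by ring
          rw [e1]
          have hnk : (0:ℝ) ≤ (n:ℝ) - k := by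
            have : (k:ℝ) ≤ (n:ℝ) := Nat.cast_le.2 hk
            linarith
          have h1 : (1:ℝ) ≤ Real.exp (t * ((n:ℝ) - k)) := Real.one_le_exp (by positivity)
          have h2 : (0:ℝ) ≤ Real.exp (-s) * s ^ k / Nat.factorial k := by positivity
          nlinarith
        · have hEq : {ω | X ω = k ∧ k ≤ n} = ∅ := by
            ext ω; simp only [Set.mem_setOf_eq, Set.mem_empty_iff_false, iff_false]
            rintro ⟨-, hkn⟩; omega
          rw [hEq]
          simp
    _ = ENNReal.ofReal (Real.exp (t*n - s)) * ∑' k : ℕ, ENNReal.ofReal ((s * Real.exp (-t)) ^ k / Nat.factorial k) := by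
        rw [← ENNReal.tsum_mul_left]
        congr 1 with m
        rw [ENNReal.ofReal_mul hC]
    _ = ENNReal.ofReal (Real.exp (t*n - s)) * ENNReal.ofReal (Real.exp (s * Real.exp (-t))) := by
        rw [tsum_ofReal_exp _ (by positivity)]
    _ = ENNReal.ofReal (Real.exp (t * n + s * (Real.exp (-t) - 1))) := by
        rw [← ENNReal.ofReal_mul hC, ← Real.exp_add]
        congr 2
        ring

/-- Let `h(n), w_n > 0` with `h(n) → ∞`, `w_n/n → 0` and `w_n²/(n h(n)) → ∞`. Then
`(1/h(n)) log[P(N_{n−w_n} ≥ n) + P(N_{n+w_n} ≤ n)] → −∞`, where for `s ≥ 0` the random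
variable `N_s` has a Poisson distribution with mean `s` (logs are taken in the extended
sense, via `ENNReal.log`, with values in `EReal`). -/
theorem poisson_tail_log_estimate
    {Ω : Type*} [MeasurableSpace Ω] (P : Measure Ω) [IsProbabilityMeasure P]
    (N : ℝ → Ω → ℕ) (hNmeas : ∀ s, Measurable (N s))
    (hNlaw : ∀ s : ℝ, 0 ≤ s → ∀ k : ℕ,
      P {ω | N s ω = k} = ENNReal.ofReal (Real.exp (-s) * s ^ k / Nat.factorial k))
    (h w : ℕ → ℝ) (hpos : ∀ n, 0 < h n) (wpos : ∀ n, 0 < w n)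
    (htop : Tendsto h atTop atTop)
    (hw : Tendsto (fun n : ℕ => w n / n) atTop (𝓝 0))
    (hw2 : Tendsto (fun n : ℕ => (w n) ^ 2 / (n * h n)) atTop atTop) :
    Tendsto (fun n : ℕ =>
        ((1 / h n : ℝ) : EReal) *
          ENNReal.log (P {ω | (n : ℕ) ≤ N ((n : ℝ) - w n) ω} +
            P {ω | N ((n : ℝ) + w n) ω ≤ n}))
      atTop (𝓝 ⊥) := by
  -- the real upper-bound sequence
  set g : ℕ → ℝ := fun n => 1 / h n * (Real.log 2 + -((w n)^2 / (8 * n))) with hg_def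
  have hg : Tendsto g atTop atBot := by
    have h1 : Tendsto (fun n : ℕ => Real.log 2 * (h n)⁻¹) atTop (𝓝 (Real.log 2 * 0)) :=
      (htop.inv_tendsto_atTop).const_mul _
    have h2 : Tendsto (fun n : ℕ => (w n)^2 / (n * h n) * 8⁻¹) atTop atTop :=
      hw2.atTop_mul_const (by norm_num)
    have h3 : Tendsto (fun n : ℕ => -((w n)^2 / (n * h n) * 8⁻¹)) atTop atBot :=
      tendsto_neg_atTop_atBot.comp h2
    have := h1.add_atBot h3
    refine this.congr fun n => ?_
    simp only [hg_def]
    ring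
  rw [EReal.tendsto_nhds_bot_iff_real]
  intro M
  have hev1 : ∀ᶠ n : ℕ in atTop, 1 ≤ n := eventually_ge_atTop 1
  have hev2 : ∀ᶠ n : ℕ in atTop, w n / n ≤ 1/2 :=
    hw.eventually_le_const (by norm_num)
  have hev3 : ∀ᶠ n : ℕ in atTop, g n < M := hg.eventually_lt_atBot M
  filter_upwards [hev1, hev2, hev3] with n hn1 hn2 hn3
  have hn0 : (0:ℝ) < n := by exact_mod_cast hn1
  set x : ℝ := w n / n with hx_def
  have hx0 : 0 < x := div_pos (wpos n) hn0
  have hwn : w n = n * x := by rw [hx_def]; field_simp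
  have h1mx : (0:ℝ) < 1 - x := by linarith
  -- Upper tail
  have hs1 : (0:ℝ) ≤ (n:ℝ) - w n := by nlinarith
  set t₁ : ℝ := -Real.log (1 - x) with ht1_def
  have ht₁ : 0 ≤ t₁ := by
    rw [ht1_def, neg_nonneg]
    exact Real.log_nonpos (by linarith) (by linarith)
  have hexp₁ : Real.exp t₁ = (1 - x)⁻¹ := by
    rw [ht1_def, Real.exp_neg, Real.exp_log h1mx]
  have B1 := pois_upper_tail P (N ((n:ℝ) - w n)) hs1 (hNlaw _ hs1) n ht₁
  have hE1 : -(t₁ * n) + ((n:ℝ) - w n) * (Real.exp t₁ - 1) ≤ -((w n)^2 / (8 * n)) := by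
    have e1eq : ((n:ℝ) - w n) * (Real.exp t₁ - 1) = n * x := by
      rw [hexp₁, hwn]
      field_simp
      ring
    rw [e1eq]
    have hlog := neg_log_one_sub_ge x hx0.le hn2
    have : x + x^2/8 ≤ t₁ := by rw [ht1_def]; exact hlog
    have hw2n : (w n)^2 / (8 * n) = n * (x^2/8) := by
      rw [hwn]; field_simp
    rw [hw2n]
    nlinarith
  -- Lower tail
  have hs2 : (0:ℝ) ≤ (n:ℝ) + w n := by linarith [wpos n]
  set t₂ : ℝ := Real.log (1 + x) with ht2_def
  have ht₂ : 0 ≤ t₂ := Real.log_nonneg (by linarith)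
  have hexp₂ : Real.exp (-t₂) = (1 + x)⁻¹ := by
    rw [ht2_def, Real.exp_neg, Real.exp_log (by linarith)]
  have B2 := pois_lower_tail P (N ((n:ℝ) + w n)) hs2 (hNlaw _ hs2) n ht₂
  have hE2 : t₂ * n + ((n:ℝ) + w n) * (Real.exp (-t₂) - 1) ≤ -((w n)^2 / (8 * n)) := by
    have e2eq : ((n:ℝ) + w n) * (Real.exp (-t₂) - 1) = -(n * x) := by
      rw [hexp₂, hwn]
      field_simp
      ring
    rw [e2eq]
    have hlog := log_one_add_le x hx0.le hn2
    have : t₂ ≤ x - x^2/8 := by rw [ht2_def]; exact hlog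
    have hw2n : (w n)^2 / (8 * n) = n * (x^2/8) := by
      rw [hwn]; field_simp
    rw [hw2n]
    nlinarith
  -- combine
  set A : ℝ := Real.exp (-((w n)^2 / (8 * n))) with hA_def
  have hA : 0 < A := Real.exp_pos _
  have hS : P {ω | (n : ℕ) ≤ N ((n : ℝ) - w n) ω} + P {ω | N ((n : ℝ) + w n) ω ≤ n}
      ≤ ENNReal.ofReal (2 * A) := by
    have b1 : P {ω | (n : ℕ) ≤ N ((n : ℝ) - w n) ω} ≤ ENNReal.ofReal A :=
      B1.trans (ENNReal.ofReal_le_ofReal (Real.exp_le_exp.2 hE1))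
    have b2 : P {ω | N ((n : ℝ) + w n) ω ≤ n} ≤ ENNReal.ofReal A :=
      B2.trans (ENNReal.ofReal_le_ofReal (Real.exp_le_exp.2 hE2))
    calc _ ≤ ENNReal.ofReal A + ENNReal.ofReal A := add_le_add b1 b2
      _ = ENNReal.ofReal (2 * A) := by
          rw [← ENNReal.ofReal_add hA.le hA.le]; congr 1; ring
  have hlogS : ENNReal.log (P {ω | (n : ℕ) ≤ N ((n : ℝ) - w n) ω}
      + P {ω | N ((n : ℝ) + w n) ω ≤ n}) ≤ ((Real.log (2 * A) : ℝ) : EReal) := by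
    calc _ ≤ ENNReal.log (ENNReal.ofReal (2 * A)) := ENNReal.log_monotone hS
      _ = ((Real.log (2 * A) : ℝ) : EReal) := ENNReal.log_ofReal_of_pos (by linarith)
  have hmul : ((1 / h n : ℝ) : EReal) *
      ENNReal.log (P {ω | (n : ℕ) ≤ N ((n : ℝ) - w n) ω} + P {ω | N ((n : ℝ) + w n) ω ≤ n})
      ≤ ((1 / h n : ℝ) : EReal) * ((Real.log (2 * A) : ℝ) : EReal) :=
    mul_le_mul_of_nonneg_left hlogS (by
      have : (0:ℝ) ≤ 1 / h n := (one_div_pos.2 (hpos n)).le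
      exact_mod_cast EReal.coe_nonneg.2 this)
  have hcoe : ((1 / h n : ℝ) : EReal) * ((Real.log (2 * A) : ℝ) : EReal) = ((g n : ℝ) : EReal) := by
    rw [← EReal.coe_mul]
    congr 1
    rw [hA_def, Real.log_mul two_ne_zero (Real.exp_ne_zero _), Real.log_exp]
  refine lt_of_le_of_lt (hmul.trans (le_of_eq hcoe)) ?_
  exact_mod_cast EReal.coe_lt_coe_iff.2 hn3
end
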